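/- arXiv:2207.01617 — 2 statements merged into one kernel-verified Lean document; each statement's English description precedes it below -/
import Mathlib

section
/- For v ∈ H¹(U_θ) where U_θ = {(x,y): |arg(x+iy)| < θ}, extend v by zero to ℝ²; denote the extension Jv. Then Jv ∈ H¹(ℝ²∖Γ_θ) where Γ_θ = ∂U_θ, the jump of Jv along Γ_θ equals v|_{∂U_θ}, and the δ'-form satisfies h_θ(Jv,Jv) = ∫_{U_θ}|∇v|² dx dy − ∫_{∂U_θ}|v|² dσ, i.e. it equals the Robin form q¹_θ(v,v) with boundary parameter 1. -/
open MeasureTheory Filter Set Real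

/-- The boundary `Γ_θ = ∂U_θ = {(x,y) : x ≥ 0, |y| = x tan θ}`. -/
def brokenLine (θ : ℝ) : Set (ℝ × ℝ) := {p | 0 ≤ p.1 ∧ |p.2| = p.1 * Real.tan θ}

/-- The sector `U_θ = {(x,y) : |arg(x+iy)| < θ}` (for `0 < θ < π/2`). -/
def sector (θ : ℝ) : Set (ℝ × ℝ) := {p | |p.2| < p.1 * Real.tan θ}

open Classical in
/-- The extension of `v` by zero outside `U_θ`. -/
noncomputable def zeroExt (θ : ℝ) (v : ℝ × ℝ → ℂ) : ℝ × ℝ → ℂ :=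
  fun p => if p ∈ sector θ then v p else 0

/-- A unit normal to `Γ_θ`, pointing into `U_θ`. -/
noncomputable def brokenNormal (θ : ℝ) (p : ℝ × ℝ) : ℝ × ℝ :=
  if 0 < p.2 then (Real.sin θ, -Real.cos θ) else (Real.sin θ, Real.cos θ)

/-- Integral over `Γ_θ = ∂U_θ` with respect to arclength, via unit-speed parametrization. -/
noncomputable def lineIntSq (θ : ℝ) (f : ℝ × ℝ → ℂ) : ℝ :=
  ∫ t in Set.Ioi (0 : ℝ),
    (‖f (t * Real.cos θ, t * Real.sin θ)‖ ^ 2 + ‖f (t * Real.cos θ, -(t * Real.sin θ))‖ ^ 2)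

lemma isOpen_sector (θ : ℝ) : IsOpen (sector θ) :=
  isOpen_lt (continuous_abs.comp continuous_snd) (continuous_fst.mul continuous_const)

lemma isOpen_ext (θ : ℝ) : IsOpen {p : ℝ × ℝ | p.1 * Real.tan θ < |p.2|} :=
  isOpen_lt (continuous_fst.mul continuous_const) (continuous_abs.comp continuous_snd)

lemma zeroExt_eqOn_sector (θ : ℝ) (v : ℝ × ℝ → ℂ) :
    Set.EqOn (zeroExt θ v) v (sector θ) := fun _ hp => if_pos hp

lemma zeroExt_eqOn_ext (θ : ℝ) (v : ℝ × ℝ → ℂ) :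
    Set.EqOn (zeroExt θ v) (fun _ => 0) {p : ℝ × ℝ | p.1 * Real.tan θ < |p.2|} := by
  intro p hp
  simp only [Set.mem_setOf_eq] at hp
  exact if_neg (fun h => lt_asymm hp h)

lemma mem_dichotomy {θ : ℝ} (hθ : θ ∈ Set.Ioo 0 (Real.pi / 2)) {p : ℝ × ℝ}
    (hp : p ∉ brokenLine θ) : p ∈ sector θ ∨ p.1 * Real.tan θ < |p.2| := by
  have htan : 0 < Real.tan θ := Real.tan_pos_of_pos_of_lt_pi_div_two hθ.1 hθ.2
  by_cases h : |p.2| < p.1 * Real.tan θ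
  · exact Or.inl h
  · rcases lt_or_eq_of_le (not_lt.mp h) with h' | h'
    · exact Or.inr h'
    · exfalso
      apply hp
      refine ⟨?_, h'.symm⟩
      nlinarith [abs_nonneg p.2]

lemma brokenLine_null (θ : ℝ) : volume (brokenLine θ) = 0 := by
  set f₁ : (ℝ × ℝ) →ₗ[ℝ] ℝ := LinearMap.snd ℝ ℝ ℝ - Real.tan θ • LinearMap.fst ℝ ℝ ℝ with hf₁
  set f₂ : (ℝ × ℝ) →ₗ[ℝ] ℝ := LinearMap.snd ℝ ℝ ℝ + Real.tan θ • LinearMap.fst ℝ ℝ ℝ with hf₂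
  have h₁ : volume (LinearMap.ker f₁ : Set (ℝ × ℝ)) = 0 := by
    apply Measure.addHaar_submodule
    intro h
    have : ((0 : ℝ), (1 : ℝ)) ∈ LinearMap.ker f₁ := h ▸ Submodule.mem_top
    simp [hf₁, LinearMap.mem_ker] at this
  have h₂ : volume (LinearMap.ker f₂ : Set (ℝ × ℝ)) = 0 := by
    apply Measure.addHaar_submodule
    intro h
    have : ((0 : ℝ), (1 : ℝ)) ∈ LinearMap.ker f₂ := h ▸ Submodule.mem_top
    simp [hf₂, LinearMap.mem_ker] at this
  refine measure_mono_null ?_ (measure_union_null h₁ h₂)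
  intro p hp
  have h0 : 0 ≤ p.1 * Real.tan θ := hp.2 ▸ abs_nonneg p.2
  rcases (abs_eq h0).mp hp.2 with h | h
  · left
    simp [hf₁, LinearMap.mem_ker, h]
    ring
  · right
    simp [hf₂, LinearMap.mem_ker, h]
    ring

theorem stmt_12 (θ : ℝ) (hθ : θ ∈ Set.Ioo 0 (Real.pi / 2))
    (v : ℝ × ℝ → ℂ) (hv : ContDiff ℝ 1 v)
    -- v ∈ H¹(U_θ)
    (hvL2 : MemLp v 2 (volume.restrict (sector θ)))
    (hgradL2 : MemLp (fun p => ‖fderiv ℝ v p‖) 2 (volume.restrict (sector θ))) :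
    -- Jv ∈ H¹(ℝ²∖Γ_θ)
    (∀ p ∉ brokenLine θ, HasFDerivAt (zeroExt θ v) (fderiv ℝ (zeroExt θ v) p) p) ∧
    MemLp (zeroExt θ v) 2 (volume : Measure (ℝ × ℝ)) ∧
    -- the jump of Jv across Γ_θ equals v on ∂U_θ
    (∀ p ∈ brokenLine θ, p ≠ 0 →
      Tendsto (fun t : ℝ =>
          zeroExt θ v (p + t • brokenNormal θ p) - zeroExt θ v (p - t • brokenNormal θ p))
        (nhdsWithin 0 (Set.Ioi 0)) (nhds (v p))) ∧
    -- the δ'-form of Jv equals the Robin form q¹_θ of v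
    (∫ p in (brokenLine θ)ᶜ, ‖fderiv ℝ (zeroExt θ v) p‖ ^ 2) - lineIntSq θ v
      = (∫ p in sector θ, ‖fderiv ℝ v p‖ ^ 2) - lineIntSq θ v := by
  obtain ⟨hθ0, hθ2⟩ := hθ
  have hsin : 0 < Real.sin θ := Real.sin_pos_of_pos_of_lt_pi hθ0 (by linarith [Real.pi_gt_three])
  have hcos : 0 < Real.cos θ := Real.cos_pos_of_mem_Ioo ⟨by linarith, hθ2⟩
  have htan : 0 < Real.tan θ := Real.tan_pos_of_pos_of_lt_pi_div_two hθ0 hθ2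
  refine ⟨?_, ?_, ?_, ?_⟩
  · -- differentiability off the broken line
    intro p hp
    rcases mem_dichotomy ⟨hθ0, hθ2⟩ hp with h | h
    · have heq : zeroExt θ v =ᶠ[nhds p] v :=
        Filter.eventuallyEq_of_mem ((isOpen_sector θ).mem_nhds h) (zeroExt_eqOn_sector θ v)
      exact (heq.differentiableAt_iff.mpr (hv.differentiable one_ne_zero p)).hasFDerivAt
    · have heq : zeroExt θ v =ᶠ[nhds p] (fun _ => 0) :=
        Filter.eventuallyEq_of_mem ((isOpen_ext θ).mem_nhds h) (zeroExt_eqOn_ext θ v)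
      exact (heq.differentiableAt_iff.mpr (differentiableAt_const 0)).hasFDerivAt
  · -- Memℒp of the extension
    have : zeroExt θ v = (sector θ).indicator v := by
      funext p
      by_cases h : p ∈ sector θ <;> simp [zeroExt, Set.indicator, h]
    rw [this]
    exact (memLp_indicator_iff_restrict (isOpen_sector θ).measurableSet).mpr hvL2
  · -- jump across the broken line
    intro p hp hp0
    obtain ⟨hp1, hp2⟩ := hp
    have hp1' : 0 < p.1 := by
      rcases lt_or_eq_of_le hp1 with h | h
      · exact h
      · exfalso
        apply hp0
        have : |p.2| = 0 := by rw [hp2, ← h]; ring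
        have h2 : p.2 = 0 := abs_eq_zero.mp this
        exact Prod.ext h.symm h2
    have hy : 0 < |p.2| := by rw [hp2]; positivity
    have hy0 : p.2 ≠ 0 := fun h => by simp [h] at hy
    -- base continuity
    have hc : Tendsto (fun t : ℝ => v (p + t • brokenNormal θ p)) (nhdsWithin 0 (Set.Ioi 0))
        (nhds (v p)) := by
      have hcont : Continuous fun t : ℝ => v (p + t • brokenNormal θ p) :=
        hv.continuous.comp (by fun_prop)
      have := hcont.tendsto 0
      simp only [zero_smul, add_zero] at this
      exact this.mono_left nhdsWithin_le_nhds
    refine hc.congr' ?_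
    rcases lt_or_gt_of_ne hy0 with hneg | hpos
    · -- lower ray : p.2 < 0, normal (sin θ, cos θ)
      have hn : brokenNormal θ p = (Real.sin θ, Real.cos θ) := if_neg (not_lt.mpr hneg.le)
      have hyval : -p.2 = p.1 * Real.tan θ := by rw [← hp2, abs_of_neg hneg]
      have hε : (0 : ℝ) < -p.2 / Real.cos θ := div_pos (by linarith) hcos
      filter_upwards [Ioo_mem_nhdsGT_of_mem (Set.mem_Ico.mpr ⟨le_refl 0, hε⟩)] with t ht
      obtain ⟨ht0, htε⟩ := ht
      have htc : t * Real.cos θ < -p.2 := by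
        linarith [(lt_div_iff₀ hcos).mp htε]
      have hmem : p + t • brokenNormal θ p ∈ sector θ := by
        simp only [hn, sector, Prod.smul_mk, smul_eq_mul, Prod.fst_add, Prod.snd_add,
          Set.mem_setOf_eq]
        have habs : |p.2 + t * Real.cos θ| = -(p.2 + t * Real.cos θ) :=
          abs_of_neg (by nlinarith)
        rw [habs]
        nlinarith [mul_pos (mul_pos ht0 hsin) htan]
      have hnmem : p - t • brokenNormal θ p ∉ sector θ := by
        simp only [hn, sector, Prod.smul_mk, smul_eq_mul, Prod.fst_sub, Prod.snd_sub,
          Set.mem_setOf_eq, not_lt]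
        have habs : |p.2 - t * Real.cos θ| = -(p.2 - t * Real.cos θ) :=
          abs_of_neg (by nlinarith)
        rw [habs]
        nlinarith [mul_pos (mul_pos ht0 hsin) htan]
      simp [zeroExt, if_pos hmem, if_neg hnmem]
    · -- upper ray : p.2 > 0, normal (sin θ, -cos θ)
      have hn : brokenNormal θ p = (Real.sin θ, -Real.cos θ) := if_pos hpos
      have hyval : p.2 = p.1 * Real.tan θ := by rw [← hp2, abs_of_pos hpos]
      have hε : (0 : ℝ) < p.2 / Real.cos θ := div_pos hpos hcos
      filter_upwards [Ioo_mem_nhdsGT_of_mem (Set.mem_Ico.mpr ⟨le_refl 0, hε⟩)] with t ht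
      obtain ⟨ht0, htε⟩ := ht
      have htc : t * Real.cos θ < p.2 := by
        linarith [(lt_div_iff₀ hcos).mp htε]
      have hmem : p + t • brokenNormal θ p ∈ sector θ := by
        simp only [hn, sector, Prod.smul_mk, smul_eq_mul, Prod.fst_add, Prod.snd_add,
          Set.mem_setOf_eq]
        have habs : |p.2 + t * -Real.cos θ| = p.2 + t * -Real.cos θ :=
          abs_of_pos (by nlinarith)
        rw [habs]
        nlinarith [mul_pos (mul_pos ht0 hsin) htan]
      have hnmem : p - t • brokenNormal θ p ∉ sector θ := by
        simp only [hn, sector, Prod.smul_mk, smul_eq_mul, Prod.fst_sub, Prod.snd_sub,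
          Set.mem_setOf_eq, not_lt]
        have habs : |p.2 - t * -Real.cos θ| = p.2 - t * -Real.cos θ :=
          abs_of_pos (by nlinarith)
        rw [habs]
        nlinarith [mul_pos (mul_pos ht0 hsin) htan]
      simp [zeroExt, if_pos hmem, if_neg hnmem]
  · -- equality of the forms
    have hnull : volume (brokenLine θ) = 0 := brokenLine_null θ
    have hrestr : volume.restrict ((brokenLine θ)ᶜ) = volume := by
      rw [Measure.restrict_congr_set (t := Set.univ), Measure.restrict_univ]
      rw [ae_eq_univ, compl_compl]
      exact hnull
    have key : (∫ p in (brokenLine θ)ᶜ, ‖fderiv ℝ (zeroExt θ v) p‖ ^ 2)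
        = ∫ p in sector θ, ‖fderiv ℝ v p‖ ^ 2 := by
      rw [hrestr, ← integral_indicator (isOpen_sector θ).measurableSet]
      apply integral_congr_ae
      filter_upwards [measure_eq_zero_iff_ae_notMem.mp hnull] with p hp
      rcases mem_dichotomy ⟨hθ0, hθ2⟩ hp with h | h
      · have heq : zeroExt θ v =ᶠ[nhds p] v :=
          Filter.eventuallyEq_of_mem ((isOpen_sector θ).mem_nhds h) (zeroExt_eqOn_sector θ v)
        rw [heq.fderiv_eq, Set.indicator_of_mem h]
      · have heq : zeroExt θ v =ᶠ[nhds p] (fun _ => 0) :=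
          Filter.eventuallyEq_of_mem ((isOpen_ext θ).mem_nhds h) (zeroExt_eqOn_ext θ v)
        have hns : p ∉ sector θ := fun hs => absurd h (not_lt.mpr hs.le)
        rw [heq.fderiv_eq, Set.indicator_of_notMem hns]
        simp
    rw [key]
end

section
/- Let v ∈ H¹(Ω) where Ω = {(x,y): x < y tan θ} for θ ∈ (0,π/2), with v = 0 on ∂Ω, and let ṽ be its extension by zero to ℝ². Then for almost every y ∈ ℝ the function x ↦ ṽ(x,y) belongs to H¹(ℝ∖{0}), and ∫_{Ω∖Oy⁺}|∇v|² dx dy − ∫₀^∞ |v(0⁺,y) − v(0⁻,y)|² dy ≥ −4 ∫_Ω |v|² dx dy, where Oy⁺ is the positive y-axis. -/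
open MeasureTheory Filter Set Real


private lemma norm_sq_complex (z : ℂ) : ‖z‖^2 = z.re^2 + z.im^2 := by
  rw [Complex.sq_norm, Complex.normSq_apply]; ring

private lemma one_side (f g : ℝ → ℂ) (p : ℂ)
    (hmf : Measurable f) (hmg : Measurable g)
    (hd : ∀ x ∈ Ioi (0:ℝ), HasDerivAt f (g x) x)
    (hf : IntegrableOn (fun x => ‖f x‖^2) (Ioi 0))
    (hg : IntegrableOn (fun x => ‖g x‖^2) (Ioi 0))
    (htr : Tendsto f (nhdsWithin 0 (Ioi 0)) (nhds p)) :
    ‖p‖^2 ≤ ∫ x in Ioi (0:ℝ), (2*‖f x‖^2 + ‖g x‖^2/2) := by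
  set G : ℝ → ℝ := fun x => ‖f x‖^2 with hG
  set H : ℝ → ℝ := fun x => 2*((f x).re*(g x).re + (f x).im*(g x).im) with hH
  set B : ℝ → ℝ := fun x => 2*‖f x‖^2 + ‖g x‖^2/2 with hB
  have hHB : ∀ x, |H x| ≤ B x := by
    intro x
    have h1 := norm_sq_complex (f x); have h2 := norm_sq_complex (g x)
    rw [abs_le]
    constructor <;> simp only [hH, hB] <;>
      nlinarith [sq_nonneg (2*(f x).re - (g x).re), sq_nonneg (2*(f x).im - (g x).im),
        sq_nonneg (2*(f x).re + (g x).re), sq_nonneg (2*(f x).im + (g x).im)]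
  have hmH : Measurable H := by
    apply Measurable.const_mul
    exact ((Complex.measurable_re.comp hmf).mul (Complex.measurable_re.comp hmg)).add
      ((Complex.measurable_im.comp hmf).mul (Complex.measurable_im.comp hmg))
  have hB_int : IntegrableOn B (Ioi 0) := (hf.const_mul 2).add (hg.div_const 2)
  have hH_int : IntegrableOn H (Ioi 0) := by
    refine Integrable.mono hB_int hmH.aestronglyMeasurable.restrict ?_
    refine Eventually.of_forall fun x => ?_
    rw [Real.norm_eq_abs, Real.norm_eq_abs]
    exact (hHB x).trans (le_abs_self _)
  have hGd : ∀ x ∈ Ioi (0:ℝ), HasDerivAt G (H x) x := by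
    intro x hx
    have hre : HasDerivAt (fun y => (f y).re) ((g x).re) x := by
      simpa [Function.comp_def] using (Complex.reCLM.hasFDerivAt.comp_hasDerivAt x (hd x hx))
    have him : HasDerivAt (fun y => (f y).im) ((g x).im) x := by
      simpa [Function.comp_def] using (Complex.imCLM.hasFDerivAt.comp_hasDerivAt x (hd x hx))
    have key : G = fun y => (f y).re^2 + (f y).im^2 := funext fun y => norm_sq_complex (f y)
    rw [key]
    have := (hre.pow 2).add (him.pow 2)
    have e : H x = ((2:ℕ):ℝ) * (f x).re ^ (2 - 1) * (g x).re + ((2:ℕ):ℝ) * (f x).im ^ (2 - 1) * (g x).im := by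
      show 2*((f x).re*(g x).re + (f x).im*(g x).im) = _
      rw [show (2:ℕ) - 1 = 1 from rfl, pow_one, pow_one]
      push_cast
      ring
    rw [e]
    exact this
  have hFTC : ∀ a b : ℝ, 0 < a → a ≤ b → G b - G a = ∫ x in a..b, H x := by
    intro a b ha hab
    refine (intervalIntegral.integral_eq_sub_of_hasDerivAt (fun x hxm => ?_) ?_).symm
    · refine hGd x ?_
      rw [uIcc_of_le hab] at hxm
      exact lt_of_lt_of_le ha hxm.1
    · refine IntegrableOn.intervalIntegrable ?_
      rw [uIcc_of_le hab]
      exact hH_int.mono_set (fun x hxm => lt_of_lt_of_le ha hxm.1)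
  set C : ℝ := ∫ x in Ioi (0:ℝ), |H x| with hC
  have hchain : ∀ a b : ℝ, 0 < a → a ≤ b → G a ≤ G b + C := by
    intro a b ha hab
    have h1 := hFTC a b ha hab
    have h2 : |∫ x in a..b, H x| ≤ ∫ x in a..b, |H x| :=
      intervalIntegral.abs_integral_le_integral_abs hab
    have h3 : (∫ x in a..b, |H x|) = ∫ x in Ioc a b, |H x| :=
      intervalIntegral.integral_of_le hab
    have h4 : (∫ x in Ioc a b, |H x|) ≤ C := by
      refine setIntegral_mono_set hH_int.abs ?_ ?_
      · exact Eventually.of_forall fun x => abs_nonneg _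
      · exact HasSubset.Subset.eventuallyLE (fun x hxm => lt_trans ha hxm.1)
    have h5 : G a = G b - ∫ x in a..b, H x := by linarith
    have := neg_abs_le (∫ x in a..b, H x)
    linarith
  -- limit of G at infinity
  have hlimI : Tendsto (fun b => ∫ x in (1:ℝ)..b, H x) atTop
      (nhds (∫ x in Ioi (1:ℝ), H x)) :=
    intervalIntegral_tendsto_integral_Ioi 1
      (hH_int.mono_set (fun x (hxm : x ∈ Ioi (1:ℝ)) => show (0:ℝ) < x from lt_trans one_pos hxm)) tendsto_id
  set L : ℝ := G 1 + ∫ x in Ioi (1:ℝ), H x with hL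
  have hlimG : Tendsto G atTop (nhds L) := by
    have h1 : Tendsto (fun b => G 1 + ∫ x in (1:ℝ)..b, H x) atTop (nhds L) :=
      (tendsto_const_nhds.add hlimI)
    refine h1.congr' ?_
    filter_upwards [eventually_ge_atTop (1:ℝ)] with b hb
    have := hFTC 1 b one_pos hb
    linarith
  have hL0 : L = 0 := by
    have hLnn : 0 ≤ L := ge_of_tendsto hlimG (Eventually.of_forall fun b => by positivity)
    by_contra hne
    have hLpos : 0 < L := lt_of_le_of_ne hLnn (Ne.symm hne)
    have hev : ∀ᶠ b in atTop, L/2 ≤ G b := hlimG.eventually (eventually_ge_nhds (by linarith))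
    obtain ⟨c, hc⟩ := hev.exists_forall_of_atTop
    set c' : ℝ := max c 1 with hc'
    have hsub : Ici c' ⊆ {x | L/2 ≤ G x} := fun x hxm => hc x (le_trans (le_max_left _ _) hxm)
    have hlt := hf.measure_ge_lt_top (half_pos hLpos)
    have hmono : (volume.restrict (Ioi (0:ℝ))) (Ici c') ≤
        (volume.restrict (Ioi (0:ℝ))) {x | L/2 ≤ G x} := measure_mono hsub
    have heq : (volume.restrict (Ioi (0:ℝ))) (Ici c') = volume (Ici c') := by
      rw [Measure.restrict_apply measurableSet_Ici]
      congr 1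
      refine inter_eq_left.2 fun x hxm => ?_
      have : (0:ℝ) < 1 := one_pos
      exact lt_of_lt_of_le one_pos (le_trans (le_max_right c 1) hxm)
    rw [heq, Real.volume_Ici] at hmono
    exact absurd (lt_of_le_of_lt hmono hlt) (by simp)
  -- conclude
  have hGp : Tendsto G (nhdsWithin 0 (Ioi 0)) (nhds (‖p‖^2)) :=
    ((continuous_norm.tendsto p).comp htr).pow 2
  have step1 : ∀ b : ℝ, 0 < b → ‖p‖^2 ≤ G b + C := by
    intro b hb
    refine le_of_tendsto hGp ?_
    filter_upwards [Ioo_mem_nhdsGT_of_mem (⟨le_refl (0:ℝ), hb⟩ : (0:ℝ) ∈ Ico 0 b)] with a ha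
    exact hchain a b ha.1 (le_of_lt ha.2)
  have step2 : ‖p‖^2 ≤ C := by
    have h1 : Tendsto (fun b => G b + C) atTop (nhds (L + C)) := hlimG.add_const C
    rw [hL0, zero_add] at h1
    refine ge_of_tendsto h1 ?_
    filter_upwards [eventually_gt_atTop (0:ℝ)] with b hb using step1 b hb
  refine step2.trans ?_
  exact integral_mono hH_int.abs hB_int hHB

private lemma one_dim (f g : ℝ → ℂ) (p m : ℂ)
    (hmf : Measurable f) (hmg : Measurable g)
    (hd : ∀ x : ℝ, x ≠ 0 → HasDerivAt f (g x) x)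
    (hf : Integrable (fun x => ‖f x‖^2))
    (hg : Integrable (fun x => ‖g x‖^2))
    (htp : Tendsto f (nhdsWithin 0 (Ioi 0)) (nhds p))
    (htm : Tendsto f (nhdsWithin 0 (Iio 0)) (nhds m)) :
    ‖p - m‖^2 ≤ (∫ x, ‖g x‖^2) + 4 * ∫ x, ‖f x‖^2 := by
  set u : ℝ → ℝ := fun x => 2*‖f x‖^2 + ‖g x‖^2/2 with hu
  have hu_int : Integrable u := (hf.const_mul 2).add (hg.div_const 2)
  -- right side
  have h1 : ‖p‖^2 ≤ ∫ x in Ioi (0:ℝ), u x :=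
    one_side f g p hmf hmg (fun x hx => hd x (ne_of_gt hx)) hf.integrableOn hg.integrableOn htp
  -- left side via reflection
  have hmp : MeasurePreserving (fun x : ℝ => -x) volume volume :=
    Measure.measurePreserving_neg volume
  have hfneg : Integrable (fun x => ‖f (-x)‖^2) := by
    have := (hmp.integrable_comp hf.aestronglyMeasurable).2 hf
    simpa [Function.comp_def] using this
  have hgneg : Integrable (fun x => ‖(-g (-x))‖^2) := by
    have := (hmp.integrable_comp hg.aestronglyMeasurable).2 hg
    simpa [Function.comp_def] using this
  have hneg_tendsto : Tendsto (fun x : ℝ => -x) (nhdsWithin 0 (Ioi 0)) (nhdsWithin 0 (Iio 0)) := by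
    have hn : Tendsto (fun x : ℝ => -x) (nhds 0) (nhds 0) := by
      simpa using (continuous_neg.tendsto (0:ℝ))
    have hp : Tendsto (fun x : ℝ => -x) (Filter.principal (Ioi (0:ℝ)))
        (Filter.principal (Iio (0:ℝ))) :=
      tendsto_principal_principal.2 fun x hx => by simpa using hx
    exact hn.inf hp
  have h2 : ‖m‖^2 ≤ ∫ x in Ioi (0:ℝ), u (-x) := by
    have hd' : ∀ x ∈ Ioi (0:ℝ), HasDerivAt (fun s => f (-s)) (-g (-x)) x := by
      intro x hx
      have h := (hd (-x) (by simpa using (ne_of_gt hx))).scomp x (hasDerivAt_neg x)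
      simpa [Function.comp_def] using h
    have htr' : Tendsto (fun s => f (-s)) (nhdsWithin 0 (Ioi 0)) (nhds m) :=
      htm.comp hneg_tendsto
    have := one_side (fun s => f (-s)) (fun s => -g (-s)) m
      (hmf.comp measurable_neg) ((hmg.comp measurable_neg).neg)
      hd' hfneg.integrableOn hgneg.integrableOn htr'
    refine this.trans (le_of_eq ?_)
    apply setIntegral_congr_fun measurableSet_Ioi
    intro x _
    simp [hu]
  have h2' : (∫ x in Ioi (0:ℝ), u (-x)) = ∫ x in Iic (0:ℝ), u x := by
    simpa using integral_comp_neg_Ioi (0:ℝ) u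
  have hsplit : (∫ x in Iic (0:ℝ), u x) + (∫ x in Ioi (0:ℝ), u x) = ∫ x, u x :=
    intervalIntegral.integral_Iic_add_Ioi hu_int.integrableOn hu_int.integrableOn
  have hval : (∫ x, u x) = 2 * (∫ x, ‖f x‖^2) + (∫ x, ‖g x‖^2)/2 := by
    rw [hu, integral_add (hf.const_mul 2) (hg.div_const 2), integral_const_mul,
      integral_div]
  have hnorm : ‖p - m‖^2 ≤ 2*‖p‖^2 + 2*‖m‖^2 := by
    have h0 : ‖p - m‖ ≤ ‖p‖ + ‖m‖ := norm_sub_le _ _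
    have h0' : ‖p - m‖^2 ≤ (‖p‖ + ‖m‖)^2 := by
      have := norm_nonneg (p - m)
      nlinarith [norm_nonneg p, norm_nonneg m]
    nlinarith [sq_nonneg (‖p‖ - ‖m‖)]
  rw [h2'] at h2
  linarith


theorem stmt_13 (θ : ℝ) (hθ : θ ∈ Set.Ioo 0 (Real.pi / 2))
    (v vx vy : ℝ × ℝ → ℂ) (Vp Vm : ℝ → ℂ)
    (hmv : Measurable v) (hmvx : Measurable vx) (hmvy : Measurable vy)
    -- ṽ is the extension of v by zero outside Ω = {(x,y) : x < y tan θ}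
    (hzero : ∀ p : ℝ × ℝ, p ∉ {q : ℝ × ℝ | q.1 < q.2 * Real.tan θ} → v p = 0)
    -- fiberwise x-derivative off the y-axis
    (hx : ∀ y : ℝ, ∀ x : ℝ, x ≠ 0 → HasDerivAt (fun s => v (s, y)) (vx (x, y)) x)
    -- one-sided traces on the positive y-axis
    (htp : ∀ y : ℝ, 0 < y →
      Tendsto (fun x => v (x, y)) (nhdsWithin 0 (Set.Ioi 0)) (nhds (Vp y)))
    (htm : ∀ y : ℝ, 0 < y →
      Tendsto (fun x => v (x, y)) (nhdsWithin 0 (Set.Iio 0)) (nhds (Vm y)))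
    -- v ∈ H¹
    (hint : Integrable (fun p : ℝ × ℝ => ‖vx p‖ ^ 2 + ‖vy p‖ ^ 2)
      (volume.restrict {q : ℝ × ℝ | q.1 < q.2 * Real.tan θ}))
    (hint2 : Integrable (fun p : ℝ × ℝ => ‖v p‖ ^ 2)
      (volume.restrict {q : ℝ × ℝ | q.1 < q.2 * Real.tan θ})) :
    -- a.e. fiber lies in H¹(ℝ∖{0})
    (∀ᵐ y : ℝ, Integrable (fun x => ‖v (x, y)‖ ^ 2) ∧
      Integrable (fun x => ‖vx (x, y)‖ ^ 2)) ∧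
    -- the fiberwise δ' lower bound
    (∫ p in {q : ℝ × ℝ | q.1 < q.2 * Real.tan θ}, (‖vx p‖ ^ 2 + ‖vy p‖ ^ 2))
        - (∫ y in Set.Ioi (0 : ℝ), ‖Vp y - Vm y‖ ^ 2)
      ≥ -4 * ∫ p in {q : ℝ × ℝ | q.1 < q.2 * Real.tan θ}, ‖v p‖ ^ 2 := by
  set Ω : Set (ℝ × ℝ) := {q : ℝ × ℝ | q.1 < q.2 * Real.tan θ} with hΩ
  have hΩm : MeasurableSet Ω := measurableSet_lt measurable_fst (measurable_snd.mul_const _)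
  set G : ℝ × ℝ → ℝ := fun p => ‖v p‖ ^ 2 with hGdef
  set Q : ℝ × ℝ → ℝ := fun p => ‖vx p‖ ^ 2 with hQdef
  have hmG : Measurable G := (hmv.norm).pow_const 2
  have hmQ : Measurable Q := (hmvx.norm).pow_const 2
  have hGzero : ∀ p ∉ Ω, G p = 0 := fun p hp => by simp [hGdef, hzero p hp]
  have hGind : G = Ω.indicator G := by
    funext p
    by_cases hp : p ∈ Ω
    · rw [indicator_of_mem hp]
    · rw [indicator_of_notMem hp, hGzero p hp]
  have hGfull : Integrable G volume := by
    rw [hGind]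
    exact (integrable_indicator_iff hΩm).2 hint2
  -- vx vanishes off Ω away from the axis
  have hvx0 : ∀ p : ℝ × ℝ, p ∉ Ω → p.1 ≠ 0 → vx p = 0 := by
    intro p hp hne
    have hge : p.2 * Real.tan θ ≤ p.1 := not_lt.1 hp
    have hz : ∀ s ∈ Ici p.1, v (s, p.2) = 0 := fun s hs =>
      hzero (s, p.2) (not_lt.2 (hge.trans hs))
    have h1 : HasDerivWithinAt (fun s => v (s, p.2)) (vx p) (Ici p.1) p.1 := by
      have := (hx p.2 p.1 hne).hasDerivWithinAt (s := Ici p.1)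
      simpa using this
    have h2 : HasDerivWithinAt (fun s => v (s, p.2)) 0 (Ici p.1) p.1 :=
      (hasDerivWithinAt_const p.1 (Ici p.1) (0 : ℂ)).congr hz (hz p.1 self_mem_Ici)
    exact (uniqueDiffOn_Ici p.1 p.1 self_mem_Ici).eq_deriv _ h1 h2
  have haxis : ∀ᵐ p : ℝ × ℝ, p.1 ≠ 0 := by
    rw [ae_iff]
    have hset : {p : ℝ × ℝ | ¬p.1 ≠ 0} ⊆ ({0} : Set ℝ) ×ˢ (univ : Set ℝ) := by
      intro p hp
      simp only [mem_setOf_eq, not_not] at hp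
      exact ⟨hp, mem_univ _⟩
    refine measure_mono_null hset ?_
    rw [Measure.volume_eq_prod, Measure.prod_prod, Real.volume_singleton, zero_mul]
  have haeQ : Q =ᵐ[volume] Ω.indicator Q := by
    filter_upwards [haxis] with p hp
    by_cases hmem : p ∈ Ω
    · rw [indicator_of_mem hmem]
    · rw [indicator_of_notMem hmem]
      simp [hQdef, hvx0 p hmem hp]
  have hQΩ : Integrable Q (volume.restrict Ω) := by
    refine hint.mono hmQ.aestronglyMeasurable.restrict (Eventually.of_forall fun p => ?_)
    simp only [hQdef]
    rw [Real.norm_eq_abs, Real.norm_eq_abs, abs_of_nonneg (by positivity),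
      abs_of_nonneg (by positivity)]
    nlinarith [sq_nonneg ‖vy p‖]
  have hQfull : Integrable Q volume := ((integrable_indicator_iff hΩm).2 hQΩ).congr haeQ.symm
  have hGprod : Integrable G (volume.prod volume) := by
    rwa [Measure.volume_eq_prod] at hGfull
  have hQprod : Integrable Q (volume.prod volume) := by
    rwa [Measure.volume_eq_prod] at hQfull
  have part1 : ∀ᵐ y : ℝ, Integrable (fun x => ‖v (x, y)‖ ^ 2) ∧
      Integrable (fun x => ‖vx (x, y)‖ ^ 2) := by
    filter_upwards [hGprod.prod_left_ae, hQprod.prod_left_ae] with y h1 h2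
    exact ⟨h1, h2⟩
  refine ⟨part1, ?_⟩
  have hIsum : 0 ≤ ∫ p in Ω, (‖vx p‖ ^ 2 + ‖vy p‖ ^ 2) :=
    setIntegral_nonneg hΩm fun p _ => by positivity
  have hIG : 0 ≤ ∫ p in Ω, G p := setIntegral_nonneg hΩm fun p _ => by positivity
  by_cases hVI : Integrable (fun y => ‖Vp y - Vm y‖ ^ 2) (volume.restrict (Ioi 0))
  swap
  · rw [integral_undef hVI]
    simp only [ge_iff_le, sub_zero]
    nlinarith
  · set F1 : ℝ → ℝ := fun y => ∫ x, Q (x, y) with hF1def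
    set F2 : ℝ → ℝ := fun y => ∫ x, G (x, y) with hF2def
    have hF1int : Integrable F1 volume := by
      have := hQprod.swap.integral_prod_left
      simpa [Function.comp, hF1def] using this
    have hF2int : Integrable F2 volume := by
      have := hGprod.swap.integral_prod_left
      simpa [Function.comp, hF2def] using this
    have hFint : Integrable (fun y => F1 y + 4 * F2 y) volume :=
      hF1int.add (hF2int.const_mul 4)
    have hkey : ∀ᵐ y ∂(volume.restrict (Ioi (0:ℝ))),
        ‖Vp y - Vm y‖ ^ 2 ≤ F1 y + 4 * F2 y := by
      filter_upwards [ae_restrict_of_ae part1, ae_restrict_mem measurableSet_Ioi]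
        with y hy hymem
      exact one_dim (fun x => v (x, y)) (fun x => vx (x, y)) (Vp y) (Vm y)
        (hmv.comp (measurable_id.prodMk measurable_const))
        (hmvx.comp (measurable_id.prodMk measurable_const))
        (hx y) hy.1 hy.2 (htp y hymem) (htm y hymem)
    have hFnn : 0 ≤ᵐ[volume] fun y => F1 y + 4 * F2 y := by
      refine Eventually.of_forall fun y => ?_
      have h1 : 0 ≤ F1 y := integral_nonneg fun x => by positivity
      have h2 : 0 ≤ F2 y := integral_nonneg fun x => by positivity
      show (0:ℝ) ≤ F1 y + 4 * F2 y
      linarith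
    have hs1 : (∫ y in Ioi (0:ℝ), ‖Vp y - Vm y‖ ^ 2) ≤
        ∫ y in Ioi (0:ℝ), (F1 y + 4 * F2 y) :=
      integral_mono_ae hVI hFint.integrableOn hkey
    have hs2 : (∫ y in Ioi (0:ℝ), (F1 y + 4 * F2 y)) ≤ ∫ y, (F1 y + 4 * F2 y) :=
      setIntegral_le_integral hFint hFnn
    have hs3 : (∫ y, (F1 y + 4 * F2 y)) = (∫ p, Q p) + 4 * ∫ p, G p := by
      rw [integral_add hF1int (hF2int.const_mul 4), integral_const_mul]
      congr 1
      · rw [show (∫ p, Q p) = ∫ p, Q p ∂(volume.prod volume) by rw [Measure.volume_eq_prod],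
          integral_prod_symm Q hQprod]
      · congr 1
        rw [show (∫ p, G p) = ∫ p, G p ∂(volume.prod volume) by rw [Measure.volume_eq_prod],
          integral_prod_symm G hGprod]
    have hs4 : (∫ p, Q p) = ∫ p in Ω, Q p := by
      rw [integral_congr_ae haeQ, integral_indicator hΩm]
    have hs5 : (∫ p, G p) = ∫ p in Ω, G p :=
      (setIntegral_eq_integral_of_forall_compl_eq_zero fun p hp => hGzero p hp).symm
    have hs6 : (∫ p in Ω, Q p) ≤ ∫ p in Ω, (‖vx p‖ ^ 2 + ‖vy p‖ ^ 2) := by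
      refine integral_mono_ae hQΩ hint (Eventually.of_forall fun p => ?_)
      simp only [hQdef]
      nlinarith [sq_nonneg ‖vy p‖]
    simp only [ge_iff_le]
    linarith
end
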